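/- Let p ≥ 0 be a real number and F : Γ → ℂ. The following are equivalent: (i) there exists M ≥ 0 such that |∑_{σ ∈ Γ} F(σ)·ξ(σ)| ≤ M·(∑_{σ ∈ Γ} λ_σ^{2p} |ξ(σ)|²)^{1/2} for every finitely supported function ξ : Γ → ℂ; (ii) ∑_{σ ∈ Γ} λ_σ^{-2p} |F(σ)|² < ∞. Moreover, in that case the least such constant M satisfies M² = ∑_{σ ∈ Γ} λ_σ^{-2p} |F(σ)|². -/

import Mathlib

open scoped BigOperators

noncomputable def lam (σ : Finset ℕ) : ℝ := ∏ k ∈ σ, ((k : ℝ) + 1)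

lemma lam_pos (σ : Finset ℕ) : 0 < lam σ :=
  Finset.prod_pos fun k _ => by positivity

lemma lam_sq (σ : Finset ℕ) (q : ℝ) : (lam σ ^ q) ^ 2 = lam σ ^ (2 * q) := by
  rw [← Real.rpow_natCast (lam σ ^ q) 2, ← Real.rpow_mul (lam_pos σ).le, mul_comm]
  norm_num

lemma lam_cancel (σ : Finset ℕ) (q : ℝ) : lam σ ^ (-q) * lam σ ^ q = 1 := by
  rw [← Real.rpow_add (lam_pos σ)]; simp

/-- Cauchy–Schwarz step. -/
lemma cs (p : ℝ) (F ξ : Finset ℕ → ℂ) (s : Finset (Finset ℕ)) :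
    ‖∑ σ ∈ s, F σ * ξ σ‖ ≤
      Real.sqrt (∑ σ ∈ s, lam σ ^ (-(2*p)) * ‖F σ‖ ^ 2) *
      Real.sqrt (∑ σ ∈ s, lam σ ^ (2*p) * ‖ξ σ‖ ^ 2) := by
  have h1 : ‖∑ σ ∈ s, F σ * ξ σ‖ ≤
      ∑ σ ∈ s, (lam σ ^ (-p) * ‖F σ‖) * (lam σ ^ p * ‖ξ σ‖) := by
    refine (norm_sum_le s _).trans (le_of_eq (Finset.sum_congr rfl fun σ _ => ?_))
    rw [norm_mul]
    calc ‖F σ‖ * ‖ξ σ‖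
        = (lam σ ^ (-p) * lam σ ^ p) * (‖F σ‖ * ‖ξ σ‖) := by
          rw [lam_cancel, one_mul]
      _ = _ := by ring
  have h2 : ∑ σ ∈ s, (lam σ ^ (-p) * ‖F σ‖) * (lam σ ^ p * ‖ξ σ‖) ≤
      Real.sqrt ((∑ σ ∈ s, (lam σ ^ (-p) * ‖F σ‖) ^ 2) *
        (∑ σ ∈ s, (lam σ ^ p * ‖ξ σ‖) ^ 2)) := by
    rw [Real.le_sqrt (Finset.sum_nonneg fun σ _ => mul_nonneg (mul_nonneg (Real.rpow_nonneg (lam_pos σ).le _) (norm_nonneg _)) (mul_nonneg (Real.rpow_nonneg (lam_pos σ).le _) (norm_nonneg _))) (mul_nonneg (Finset.sum_nonneg fun σ _ => sq_nonneg _) (Finset.sum_nonneg fun σ _ => sq_nonneg _))]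
    exact Finset.sum_mul_sq_le_sq_mul_sq s _ _
  have e1 : ∑ σ ∈ s, (lam σ ^ (-p) * ‖F σ‖) ^ 2
      = ∑ σ ∈ s, lam σ ^ (-(2*p)) * ‖F σ‖ ^ 2 := by
    refine Finset.sum_congr rfl fun σ _ => ?_
    rw [mul_pow, lam_sq]; ring_nf
  have e2 : ∑ σ ∈ s, (lam σ ^ p * ‖ξ σ‖) ^ 2
      = ∑ σ ∈ s, lam σ ^ (2*p) * ‖ξ σ‖ ^ 2 := by
    refine Finset.sum_congr rfl fun σ _ => ?_
    rw [mul_pow, lam_sq]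
  calc ‖∑ σ ∈ s, F σ * ξ σ‖ ≤ _ := h1
    _ ≤ _ := h2
    _ = _ := by rw [e1, e2, Real.sqrt_mul (Finset.sum_nonneg fun σ _ => mul_nonneg (Real.rpow_nonneg (lam_pos σ).le _) (sq_nonneg _))]

lemma key (p : ℝ) (F : Finset ℕ → ℂ) (M : ℝ) (hM : 0 ≤ M)
    (h : ∀ ξ : Finset ℕ →₀ ℂ,
        ‖∑ σ ∈ ξ.support, F σ * ξ σ‖
          ≤ M * Real.sqrt (∑ σ ∈ ξ.support, lam σ ^ (2 * p) * ‖ξ σ‖ ^ 2))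
    (s : Finset (Finset ℕ)) :
    ∑ σ ∈ s, lam σ ^ (-(2 * p)) * ‖F σ‖ ^ 2 ≤ M ^ 2 := by
  set g : Finset ℕ → ℝ := fun σ => lam σ ^ (-(2 * p)) * ‖F σ‖ ^ 2 with hgdef
  set ξf : Finset ℕ → ℂ := fun σ =>
    if σ ∈ s then (starRingEnd ℂ) (F σ) * ((lam σ ^ (-(2 * p)) : ℝ) : ℂ) else 0 with hξf
  set ξ : Finset ℕ →₀ ℂ := Finsupp.onFinset s ξf (fun σ hσ => by
    by_contra hc
    exact hσ (by simp only [hξf, if_neg hc])) with hξ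
  have hsupp : ξ.support ⊆ s := Finsupp.support_onFinset_subset
  have hzero : ∀ σ, σ ∉ ξ.support → ξ σ = 0 := fun σ h' => Finsupp.notMem_support_iff.mp h'
  have hval : ∀ σ ∈ s, ξ σ = (starRingEnd ℂ) (F σ) * ((lam σ ^ (-(2 * p)) : ℝ) : ℂ) :=
    fun σ hσ => by simp [hξ, hξf, hσ]
  have e1 : ∑ σ ∈ ξ.support, F σ * ξ σ = ((∑ σ ∈ s, g σ : ℝ) : ℂ) := by
    rw [Finset.sum_subset hsupp (fun σ hσ h' => by rw [hzero σ h', mul_zero])]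
    push_cast
    refine Finset.sum_congr rfl fun σ hσ => ?_
    rw [hval σ hσ, ← mul_assoc, Complex.mul_conj, hgdef, ← Complex.sq_norm]
    push_cast
    try ring
  have e2 : ∑ σ ∈ ξ.support, lam σ ^ (2 * p) * ‖ξ σ‖ ^ 2 = ∑ σ ∈ s, g σ := by
    rw [Finset.sum_subset hsupp (fun σ hσ h' => by rw [hzero σ h']; simp)]
    refine Finset.sum_congr rfl fun σ hσ => ?_
    rw [hval σ hσ, norm_mul, Complex.norm_conj, Complex.norm_real, Real.norm_eq_abs,
      abs_of_nonneg (Real.rpow_nonneg (lam_pos σ).le _), hgdef]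
    have hc := lam_cancel σ (2 * p)
    linear_combination (‖F σ‖ ^ 2 * lam σ ^ (-(2 * p))) * hc
  have hc0 : 0 ≤ ∑ σ ∈ s, g σ :=
    Finset.sum_nonneg fun σ _ => mul_nonneg (Real.rpow_nonneg (lam_pos σ).le _) (sq_nonneg _)
  have hb := h ξ
  rw [e1, e2, Complex.norm_real, Real.norm_eq_abs, abs_of_nonneg hc0] at hb
  nlinarith [Real.sq_sqrt hc0, Real.sqrt_nonneg (∑ σ ∈ s, g σ),
    sq_nonneg (M - Real.sqrt (∑ σ ∈ s, g σ))]

theorem stmt2 (p : ℝ) (hp : 0 ≤ p) (F : Finset ℕ → ℂ) :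
    ((∃ M : ℝ, 0 ≤ M ∧ ∀ ξ : Finset ℕ →₀ ℂ,
        ‖∑ σ ∈ ξ.support, F σ * ξ σ‖
          ≤ M * Real.sqrt (∑ σ ∈ ξ.support, lam σ ^ (2 * p) * ‖ξ σ‖ ^ 2)) ↔
      Summable (fun σ : Finset ℕ => lam σ ^ (-(2 * p)) * ‖F σ‖ ^ 2)) ∧
    (Summable (fun σ : Finset ℕ => lam σ ^ (-(2 * p)) * ‖F σ‖ ^ 2) →
      IsLeast {M : ℝ | 0 ≤ M ∧ ∀ ξ : Finset ℕ →₀ ℂ,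
          ‖∑ σ ∈ ξ.support, F σ * ξ σ‖
            ≤ M * Real.sqrt (∑ σ ∈ ξ.support, lam σ ^ (2 * p) * ‖ξ σ‖ ^ 2)}
        (Real.sqrt (∑' σ : Finset ℕ, lam σ ^ (-(2 * p)) * ‖F σ‖ ^ 2))) := by
  have hg0 : ∀ σ : Finset ℕ, 0 ≤ lam σ ^ (-(2 * p)) * ‖F σ‖ ^ 2 :=
    fun σ => mul_nonneg (Real.rpow_nonneg (lam_pos σ).le _) (sq_nonneg _)
  have mem : Summable (fun σ : Finset ℕ => lam σ ^ (-(2 * p)) * ‖F σ‖ ^ 2) →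
      ∀ ξ : Finset ℕ →₀ ℂ,
        ‖∑ σ ∈ ξ.support, F σ * ξ σ‖
          ≤ Real.sqrt (∑' σ : Finset ℕ, lam σ ^ (-(2 * p)) * ‖F σ‖ ^ 2) *
            Real.sqrt (∑ σ ∈ ξ.support, lam σ ^ (2 * p) * ‖ξ σ‖ ^ 2) := by
    intro hsum ξ
    refine (cs p F ξ ξ.support).trans (mul_le_mul_of_nonneg_right ?_ (Real.sqrt_nonneg _))
    exact Real.sqrt_le_sqrt (Summable.sum_le_tsum _ (fun σ _ => hg0 σ) hsum)
  constructor
  · constructor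
    · rintro ⟨M, hM, h⟩
      exact summable_of_sum_le hg0 (key p F M hM h)
    · intro hsum
      exact ⟨_, Real.sqrt_nonneg _, mem hsum⟩
  · intro hsum
    refine ⟨⟨Real.sqrt_nonneg _, mem hsum⟩, ?_⟩
    rintro M ⟨hM, h⟩
    have ht := Summable.tsum_le_of_sum_le hsum (key p F M hM h)
    calc Real.sqrt _ ≤ Real.sqrt (M ^ 2) := Real.sqrt_le_sqrt ht
      _ = M := Real.sqrt_sq hM
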